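/- Let G be a finite group, p a prime, and N a normal subgroup of G with N ≤ Z*(G). Then O_p(G/N) equals the image of O_p(G) under the quotient map G → G/N (that is, O_p(G/N) = O_p(G)N/N). -/

import Mathlib

/-- The hypercenter `Z*(G)` of a group: the union (supremum) of the upper central series. -/
def hypercenter (G : Type*) [Group G] : Subgroup G :=
  ⨆ n : ℕ, upperCentralSeries G n

/-- The `p`-core `O_p(G)`: the largest normal `p`-subgroup of `G`, i.e. the supremum of all
normal `p`-subgroups. -/
def pCore (p : ℕ) (G : Type*) [Group G] : Subgroup G :=
  ⨆ (H : Subgroup G) (_ : H.Normal ∧ IsPGroup p H), H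

open Pointwise

section aux
variable {p : ℕ} {G : Type*} [Group G]

lemma le_pCore {H : Subgroup G} (h : H.Normal ∧ IsPGroup p H) : H ≤ pCore p G :=
  le_iSup_of_le H (le_iSup_of_le h le_rfl)

lemma mem_pCore_iff {x : G} :
    x ∈ pCore p G ↔ ∃ H : Subgroup G, (H.Normal ∧ IsPGroup p H) ∧ x ∈ H := by
  constructor
  · intro hx
    rw [pCore, iSup_subtype'] at hx
    have hdir : Directed (· ≤ ·)
        (fun H : {H : Subgroup G // H.Normal ∧ IsPGroup p H} => (H : Subgroup G)) := by
      rintro ⟨H₁, h₁⟩ ⟨H₂, h₂⟩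
      haveI := h₁.1; haveI := h₂.1
      exact ⟨⟨H₁ ⊔ H₂, inferInstance, h₁.2.to_sup_of_normal_right h₂.2⟩,
        le_sup_left, le_sup_right⟩
    haveI : Nonempty {H : Subgroup G // H.Normal ∧ IsPGroup p H} :=
      ⟨⟨⊥, inferInstance, IsPGroup.of_bot⟩⟩
    obtain ⟨⟨H, hH⟩, hxH⟩ := (Subgroup.mem_iSup_of_directed hdir).mp hx
    exact ⟨H, hH, hxH⟩
  · rintro ⟨H, hH, hxH⟩
    exact le_pCore hH hxH

instance pCore_normal : (pCore p G).Normal := by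
  constructor
  intro x hx g
  obtain ⟨H, hH, hxH⟩ := mem_pCore_iff.mp hx
  haveI := hH.1
  exact le_pCore hH (hH.1.conj_mem x hxH g)

lemma pCore_isPGroup : IsPGroup p (pCore p G) := by
  rintro ⟨x, hx⟩
  obtain ⟨H, hH, hxH⟩ := mem_pCore_iff.mp hx
  obtain ⟨n, hn⟩ := hH.2 ⟨x, hxH⟩
  refine ⟨n, ?_⟩
  have : (x : G) ^ p ^ n = 1 := by
    have := congrArg (Subgroup.subtype H) hn
    simpa using this
  ext
  simpa using this

lemma exists_hypercenter_eq [Finite G] :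
    ∃ n, hypercenter G = upperCentralSeries G n := by
  have hfin : (Set.range fun n => upperCentralSeries G n).Finite := Set.toFinite _
  obtain ⟨A, ⟨n, rfl⟩, hmax⟩ := Set.Finite.exists_maximalFor id _ hfin ⟨_, Set.mem_range_self 0⟩
  refine ⟨n, le_antisymm (iSup_le fun m => ?_) (le_iSup _ n)⟩
  rcases le_total m n with h | h
  · exact upperCentralSeries_mono G h
  · exact (hmax (Set.mem_range_self m) (upperCentralSeries_mono G h)).ge

lemma mem_upperCentralSeries_of_mem {K : Subgroup G} :
    ∀ (n : ℕ) (x : G) (hx : x ∈ upperCentralSeries G n) (hxK : x ∈ K),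
      (⟨x, hxK⟩ : K) ∈ upperCentralSeries K n := by
  intro n
  induction n with
  | zero => intro x hx hxK; simp only [upperCentralSeries, Subgroup.upperCentralSeries_zero] at hx ⊢
            simpa [Subgroup.mem_bot] using hx
  | succ n ih =>
      intro x hx hxK
      simp only [upperCentralSeries, Subgroup.mem_upperCentralSeries_succ_iff] at hx ⊢
      intro y
      have h1 : x * (y : G) * x⁻¹ * (y : G)⁻¹ ∈ K :=
        mul_mem (mul_mem (mul_mem hxK y.2) (inv_mem hxK)) (inv_mem y.2)
      have h2 : ((⟨x, hxK⟩ : K) * y * (⟨x, hxK⟩ : K)⁻¹ * y⁻¹) = (⟨_, h1⟩ : K) := by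
        ext; simp
      rw [commutatorElement_def, h2]
      exact ih _ (hx (y : G)) h1

lemma isNilpotent_of_lcs_le_ucs (c n : ℕ)
    (h : lowerCentralSeries (⊤ : Subgroup G) c ≤ upperCentralSeries G n) : Group.IsNilpotent G := by
  rw [nilpotent_iff_lowerCentralSeries]
  refine ⟨c + n, ?_⟩
  have key : ∀ j, lowerCentralSeries (⊤ : Subgroup G) (c + j) ≤ upperCentralSeries G (n - j) := by
    intro j
    induction j with
    | zero => simpa using h
    | succ j ih =>
        cases hnj : n - j with
        | zero =>
            rw [hnj, upperCentralSeries, Subgroup.upperCentralSeries_zero, le_bot_iff] at ih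
            calc lowerCentralSeries (⊤ : Subgroup G) (c + (j + 1)) ≤ lowerCentralSeries (⊤ : Subgroup G) (c + j) :=
                  lowerCentralSeries_antitone _ (by omega)
              _ = ⊥ := ih
              _ ≤ _ := bot_le
        | succ m =>
            rw [show c + (j + 1) = (c + j) + 1 from rfl, lowerCentralSeries, Subgroup.lowerCentralSeries_succ]
            have hm : n - (j + 1) = m := by omega
            rw [hm]
            refine le_trans (Subgroup.commutator_mono (hnj ▸ ih) le_rfl) ?_
            rw [Subgroup.commutator_le]
            intro g hg h' _
            exact (mem_upperCentralSeries_succ_iff.mp hg) h'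
  have := key n
  simpa [upperCentralSeries, lowerCentralSeries] using this

end aux


/-- Let `G` be a finite group, `p` a prime, and `N` a normal subgroup of `G`
with `N ≤ Z*(G)`. Then `O_p(G/N) = O_p(G)N/N`, i.e. `O_p(G/N)` is the image of `O_p(G)` under
the quotient map. -/
theorem pCore_quotient_of_le_hypercenter
    {G : Type*} [Group G] [Finite G] (p : ℕ) (hp : p.Prime)
    (N : Subgroup G) [N.Normal] (hN : N ≤ hypercenter G) :
    pCore p (G ⧸ N) = (pCore p G).map (QuotientGroup.mk' N) := by
  haveI := Fact.mk hp
  set f := QuotientGroup.mk' N with hf_def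
  have hf : Function.Surjective f := QuotientGroup.mk'_surjective N
  set K := (pCore p (G ⧸ N)).comap f with hKdef
  haveI hKn : K.Normal := Subgroup.Normal.comap inferInstance f
  have hNK : N ≤ K := by
    intro x hx
    have : f x = 1 := (QuotientGroup.eq_one_iff x).mpr hx
    show f x ∈ pCore p (G ⧸ N)
    rw [this]; exact one_mem _
  have hesc : ∀ k : K, ∃ m : ℕ, ((k : G)) ^ p ^ m ∈ N := by
    intro k
    obtain ⟨m, hm⟩ := pCore_isPGroup (p := p) (G := G ⧸ N) ⟨f (k : G), k.2⟩
    refine ⟨m, ?_⟩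
    have h1 : (f (k : G)) ^ p ^ m = 1 := congrArg Subtype.val hm
    rw [← map_pow] at h1
    exact (QuotientGroup.eq_one_iff _).mp h1
  obtain ⟨n, hn⟩ := exists_hypercenter_eq (G := G)
  have hNZ : N ≤ upperCentralSeries G n := hn ▸ hN
  have hNK' : N.subgroupOf K ≤ upperCentralSeries K n := by
    rintro ⟨x, hxK⟩ hx
    rw [Subgroup.mem_subgroupOf] at hx
    exact mem_upperCentralSeries_of_mem n x (hNZ hx) hxK
  have hQK : IsPGroup p (↥K ⧸ N.subgroupOf K) := by
    intro q
    obtain ⟨k, rfl⟩ := QuotientGroup.mk_surjective q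
    obtain ⟨m, hm⟩ := hesc k
    refine ⟨m, ?_⟩
    rw [← QuotientGroup.mk_pow]
    rw [QuotientGroup.eq_one_iff]
    rw [Subgroup.mem_subgroupOf]
    simpa using hm
  haveI hQKnil : Group.IsNilpotent (↥K ⧸ N.subgroupOf K) := hQK.isNilpotent
  obtain ⟨c, hc⟩ := nilpotent_iff_lowerCentralSeries.mp hQKnil
  have hlcs : lowerCentralSeries (⊤ : Subgroup K) c ≤ N.subgroupOf K := by
    intro x hx
    have h1 := lowerCentralSeries.map (QuotientGroup.mk' (N.subgroupOf K)) c
      (Subgroup.mem_map_of_mem _ hx)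
    rw [hc, Subgroup.mem_bot] at h1
    exact (QuotientGroup.eq_one_iff _).mp h1
  haveI hKnil : Group.IsNilpotent K := isNilpotent_of_lcs_le_ucs c n (hlcs.trans hNK')
  obtain ⟨P⟩ : Nonempty (Sylow p K) := inferInstance
  have h03 := (isNilpotent_of_finite_tfae (G := ↥K)).out 0 3
  haveI hPn : (P : Subgroup K).Normal := h03.mp hKnil p (Fact.mk hp) P
  haveI : (P : Subgroup K).Characteristic := P.characteristic_of_normal hPn
  set Psub := (P : Subgroup K).map K.subtype with hPsubdef
  haveI hPsubN : Psub.Normal := inferInstance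
  have hPsubP : IsPGroup p Psub := P.2.map K.subtype
  have hPle : Psub ≤ pCore p G := le_pCore ⟨hPsubN, hPsubP⟩
  set Q := Psub ⊔ N with hQdef
  have hKQ : K ≤ Q := by
    have hr1 : Q.relIndex K ∣ (P : Subgroup K).index := by
      have hdvd := Subgroup.relIndex_dvd_of_le_left K (le_sup_left : Psub ≤ Q)
      have heq : Psub.relIndex K = (P : Subgroup K).index := by
        unfold Subgroup.relIndex
        congr 1
        exact Subgroup.comap_map_eq_self_of_injective K.subtype_injective _
      rwa [heq] at hdvd
    have hnot : ¬ p ∣ (P : Subgroup K).index := P.not_dvd_index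
    have hpg : IsPGroup p (↥K ⧸ Q.subgroupOf K) := by
      intro q
      obtain ⟨k, rfl⟩ := QuotientGroup.mk_surjective q
      obtain ⟨m, hm⟩ := hesc k
      refine ⟨m, ?_⟩
      rw [← QuotientGroup.mk_pow, QuotientGroup.eq_one_iff, Subgroup.mem_subgroupOf]
      exact Subgroup.mem_sup_right (by simpa using hm)
    obtain ⟨m, hm⟩ := hpg.exists_card_eq
    have hcard : Q.relIndex K = p ^ m := by
      rw [Subgroup.relIndex, Subgroup.index_eq_card]
      exact hm
    have hone : Q.relIndex K = 1 := by
      rcases Nat.eq_zero_or_pos m with h0 | h0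
      · rw [hcard, h0, pow_zero]
      · exact absurd (dvd_trans (dvd_pow_self p h0.ne') (hcard ▸ hr1)) hnot
    exact Subgroup.relIndex_eq_one.mp hone
  apply le_antisymm
  · have hmap : K.map f = pCore p (G ⧸ N) :=
      Subgroup.map_comap_eq_self_of_surjective hf _
    rw [← hmap]
    rintro x ⟨k, hk, rfl⟩
    have hk' : (k : G) ∈ (Psub : Set G) * (N : Set G) := by
      rw [← Subgroup.mul_normal]
      exact hKQ hk
    obtain ⟨a, ha, b, hb, rfl⟩ := hk'
    have hab : f (a * b) = f a := by
      have hb1 : f b = 1 := (QuotientGroup.eq_one_iff b).mpr hb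
      rw [map_mul, hb1, mul_one]
    rw [hab]
    exact Subgroup.mem_map_of_mem f (hPle ha)
  · exact le_pCore ⟨Subgroup.Normal.map inferInstance f hf, pCore_isPGroup.map f⟩
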